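/- Let 0 ≤ a < b, let α ∈ [0,1], m ∈ (0,1], s ∈ (0,1], and let f : ℝ → ℝ be differentiable on an open interval containing [a, b/m] with f' integrable on [a, b]. If |f'| is s-(α,m)-convex, i.e. for all x, y ∈ [a, b] and t ∈ [0,1], |f'(t·x + (1−t)·y)| ≤ t^{αs} |f'(x)| + m (1 − t^{αs}) |f'(y/m)|, then |(f(a)+f(b))/2 − (1/(b−a)) ∫_a^b f(x) dx| ≤ ((b−a)/2) [ v₁ |f'(a)| + v₂ |f'(b/m)| ], where v₁ = (1 + 2^{αs}·(αs)) / (2^{αs} (αs+1)(αs+2)) and v₂ = m (1/2 − v₁). -/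

import Mathlib

open MeasureTheory intervalIntegral

lemma key_integral (q : ℝ) (hq : 0 ≤ q) :
    ∫ t in (0:ℝ)..1, |1 - 2*t| * t ^ q
      = (1 + 2 ^ q * q) / (2 ^ q * (q + 1) * (q + 2)) := by
  have hq1 : (0:ℝ) < q + 1 := by linarith
  have hq2 : (0:ℝ) < q + 2 := by linarith
  have hiq : ∀ u v : ℝ, IntervalIntegrable (fun t : ℝ => t ^ q) volume u v :=
    fun u v => intervalIntegrable_rpow' (by linarith)
  have hiq1 : ∀ u v : ℝ, IntervalIntegrable (fun t : ℝ => t ^ (q+1)) volume u v :=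
    fun u v => intervalIntegrable_rpow' (by linarith)
  have hcont : Continuous (fun t : ℝ => |1 - 2*t| * t ^ q) :=
    ((continuous_const.sub (continuous_const.mul continuous_id)).abs).mul
      (Real.continuous_rpow_const hq)
  have hsplit := integral_add_adjacent_intervals (μ := volume) (a := (0:ℝ)) (b := 1/2) (c := 1)
    (f := fun t : ℝ => |1 - 2*t| * t ^ q) (hcont.intervalIntegrable _ _)
    (hcont.intervalIntegrable _ _)
  have e1 : ∫ t in (0:ℝ)..(1/2), |1 - 2*t| * t ^ q
      = ∫ t in (0:ℝ)..(1/2), (t ^ q - 2 * t ^ (q+1)) := by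
    apply integral_congr
    intro t ht
    rw [Set.uIcc_of_le (by norm_num)] at ht
    have h1 : |1 - 2*t| = 1 - 2*t := abs_of_nonneg (by linarith [ht.2])
    have h2 : t ^ (q+1) = t ^ q * t := Real.rpow_add_one' ht.1 hq1.ne'
    simp only [h1, h2]; ring
  have e2 : ∫ t in (1/2:ℝ)..1, |1 - 2*t| * t ^ q
      = ∫ t in (1/2:ℝ)..1, (2 * t ^ (q+1) - t ^ q) := by
    apply integral_congr
    intro t ht
    rw [Set.uIcc_of_le (by norm_num)] at ht
    have h1 : |1 - 2*t| = -(1 - 2*t) := abs_of_nonpos (by linarith [ht.1])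
    have h2 : t ^ (q+1) = t ^ q * t := Real.rpow_add_one' (by linarith [ht.1]) hq1.ne'
    simp only [h1, h2]; ring
  have v1 : ∫ t in (0:ℝ)..(1/2), (t ^ q - 2 * t ^ (q+1))
      = (1/2) ^ (q+1) / (q+1) - 2 * ((1/2) ^ (q+2) / (q+2)) := by
    rw [integral_sub (hiq _ _) ((hiq1 _ _).const_mul 2), intervalIntegral.integral_const_mul,
      integral_rpow (Or.inl (by linarith)), integral_rpow (Or.inl (by linarith))]
    rw [Real.zero_rpow hq1.ne', Real.zero_rpow (by linarith : q + 1 + 1 ≠ 0)]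
    ring_nf
  have v2 : ∫ t in (1/2:ℝ)..1, (2 * t ^ (q+1) - t ^ q)
      = 2 * ((1 - (1/2) ^ (q+2)) / (q+2)) - (1 - (1/2) ^ (q+1)) / (q+1) := by
    rw [integral_sub ((hiq1 _ _).const_mul 2) (hiq _ _), intervalIntegral.integral_const_mul,
      integral_rpow (Or.inl (by linarith)), integral_rpow (Or.inl (by linarith))]
    rw [Real.one_rpow, Real.one_rpow]
    ring_nf
  rw [← hsplit, e1, e2, v1, v2]
  have hP : (0:ℝ) < 2 ^ q := Real.rpow_pos_of_pos two_pos q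
  have h12 : ((1:ℝ)/2) ^ (q+1) = (2 ^ q * 2)⁻¹ := by
    rw [one_div, Real.inv_rpow (by norm_num : (0:ℝ) ≤ 2), Real.rpow_add_one (by norm_num) q]
  have h24 : ((1:ℝ)/2) ^ (q+2) = (2 ^ q * 4)⁻¹ := by
    rw [one_div, Real.inv_rpow (by norm_num : (0:ℝ) ≤ 2), Real.rpow_add two_pos q 2,
      show (2:ℝ) ^ (2:ℝ) = 4 by
        rw [show (2:ℝ) = ((2:ℕ):ℝ) by norm_num, Real.rpow_natCast]; norm_num]
  rw [h12, h24]
  field_simp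
  ring

/-- Theorem 1: if `|f'|` is `s`-`(α,m)`-convex (first sense), then a trapezoid-type
Hermite–Hadamard estimate holds with constants `v₁, v₂`. -/
theorem hh_s_alpha_m_convex_abs_deriv (f f' : ℝ → ℝ) (a b α m s c d : ℝ)
    (ha : 0 ≤ a) (hab : a < b)
    (hα : α ∈ Set.Icc (0:ℝ) 1) (hm : m ∈ Set.Ioc (0:ℝ) 1) (hs : s ∈ Set.Ioc (0:ℝ) 1)
    (hc : c < a) (hd : b / m < d)
    (hdiff : ∀ x ∈ Set.Ioo c d, HasDerivAt f (f' x) x)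
    (hint : IntervalIntegrable f' volume a b)
    (hconv : ∀ x ∈ Set.Icc a b, ∀ y ∈ Set.Icc a b, ∀ t ∈ Set.Icc (0:ℝ) 1,
      |f' (t * x + (1 - t) * y)| ≤
        t ^ (α * s) * |f' x| + m * (1 - t ^ (α * s)) * |f' (y / m)|) :
    |(f a + f b) / 2 - (1 / (b - a)) * ∫ x in a..b, f x| ≤
      ((b - a) / 2) *
        ((1 + 2 ^ (α * s) * (α * s)) / (2 ^ (α * s) * (α * s + 1) * (α * s + 2)) * |f' a|
          + m * (1 / 2 -
              (1 + 2 ^ (α * s) * (α * s)) / (2 ^ (α * s) * (α * s + 1) * (α * s + 2)))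
            * |f' (b / m)|) := by
  set q : ℝ := α * s with hq_def
  have hq : 0 ≤ q := mul_nonneg hα.1 hs.1.le
  set A : ℝ := |f' a| with hA_def
  set B : ℝ := |f' (b / m)| with hB_def
  have hA0 : 0 ≤ A := abs_nonneg _
  have hB0 : 0 ≤ B := abs_nonneg _
  have hba : (0 : ℝ) < b - a := by linarith
  have hb0 : (0 : ℝ) < b := lt_of_le_of_lt ha hab
  set c₀ : ℝ := (a + b) / 2 with hc₀_def
  -- the majorant profile on [0,1]
  set G : ℝ → ℝ := fun t => |1/2 - t| * (t ^ q * A + m * (1 - t ^ q) * B) with hG_def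
  have hGcont : Continuous G := by
    apply ((continuous_const.sub continuous_id).abs).mul
    exact (((Real.continuous_rpow_const hq).mul continuous_const).add
      ((continuous_const.mul (continuous_const.sub (Real.continuous_rpow_const hq))).mul
        continuous_const))
  -- subset fact for differentiability
  have hsub : Set.uIcc a b ⊆ Set.Ioo c d := by
    rw [Set.uIcc_of_le hab.le]
    intro x hx
    have hbm : b ≤ b / m := by
      rw [le_div_iff₀ hm.1]
      nlinarith [hm.2, hb0]
    exact ⟨lt_of_lt_of_le hc hx.1, lt_of_le_of_lt (hx.2.trans hbm) hd⟩
  -- integration by parts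
  have hparts := intervalIntegral.integral_mul_deriv_eq_deriv_mul
    (u := f) (v := fun x => x - c₀) (u' := f') (v' := fun _ => (1:ℝ))
    (fun x hx => hdiff x (hsub hx))
    (fun x _ => (hasDerivAt_id x).sub_const c₀)
    hint (intervalIntegrable_const)
  simp only [mul_one] at hparts
  set K : ℝ := ∫ x in a..b, f' x * (x - c₀) with hK_def
  have hiden : (f a + f b) / 2 - (1 / (b - a)) * ∫ x in a..b, f x
      = (1 / (b - a)) * K := by
    rw [hparts, hc₀_def]
    field_simp
    ring
  rw [hiden, abs_mul, abs_of_pos (by positivity : (0:ℝ) < 1 / (b - a))]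
  -- integrability facts
  have hH : IntervalIntegrable (fun x => |f' x * (x - c₀)|) volume a b :=
    (hint.mul_continuousOn ((continuous_id.sub continuous_const).continuousOn)).abs
  have hFcont : Continuous (fun x : ℝ => (b - a) * G ((b - x) / (b - a))) :=
    continuous_const.mul (hGcont.comp
      ((continuous_const.sub continuous_id).div_const _))
  -- pointwise bound
  have hpt : ∀ x ∈ Set.Icc a b,
      |f' x * (x - c₀)| ≤ (b - a) * G ((b - x) / (b - a)) := by
    intro x hx
    set t : ℝ := (b - x) / (b - a) with ht_def
    have ht0 : 0 ≤ t := div_nonneg (by linarith [hx.2]) hba.le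
    have ht1 : t ≤ 1 := by
      rw [ht_def, div_le_one hba]; linarith [hx.1]
    have hx_eq : t * a + (1 - t) * b = x := by
      rw [ht_def]; field_simp; ring
    have hbound := hconv a ⟨le_refl a, hab.le⟩ b ⟨hab.le, le_refl b⟩ t ⟨ht0, ht1⟩
    rw [hx_eq] at hbound
    have habs : |x - c₀| = (b - a) * |1/2 - t| := by
      rw [← abs_of_pos hba, ← abs_mul]
      congr 1
      rw [ht_def, hc₀_def]
      field_simp
      ring
    rw [abs_mul, habs, hG_def]
    calc |f' x| * ((b - a) * |1/2 - t|)
        ≤ (t ^ q * A + m * (1 - t ^ q) * B) * ((b - a) * |1/2 - t|) := by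
          apply mul_le_mul_of_nonneg_right hbound
          positivity
      _ = (b - a) * (|1/2 - t| * (t ^ q * A + m * (1 - t ^ q) * B)) := by ring
  -- main chain of inequalities
  have hstep1 : |K| ≤ ∫ x in a..b, |f' x * (x - c₀)| :=
    intervalIntegral.abs_integral_le_integral_abs hab.le
  have hstep2 : (∫ x in a..b, |f' x * (x - c₀)|)
      ≤ ∫ x in a..b, (b - a) * G ((b - x) / (b - a)) :=
    intervalIntegral.integral_mono_on hab.le hH (hFcont.intervalIntegrable _ _) hpt
  -- change of variables
  have hcov : (∫ x in a..b, (b - a) * G ((b - x) / (b - a)))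
      = (b - a) * ((b - a) * ∫ t in (0:ℝ)..1, G t) := by
    rw [intervalIntegral.integral_const_mul]
    congr 1
    have h1 := intervalIntegral.integral_comp_sub_left (fun y => G (y / (b - a))) b
      (a := a) (b := b)
    rw [h1]
    simp only [sub_self]
    rw [intervalIntegral.integral_comp_div (c := b - a) G hba.ne']
    rw [zero_div, div_self hba.ne', smul_eq_mul]
  -- compute ∫ G
  have hIq : (∫ t in (0:ℝ)..1, |1/2 - t| * t ^ q)
      = (1 + 2 ^ q * q) / (2 ^ q * (q + 1) * (q + 2)) / 2 := by
    rw [← key_integral q hq, ← intervalIntegral.integral_div]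
    apply intervalIntegral.integral_congr
    intro t _
    have : |1 - 2*t| = 2 * |1/2 - t| := by
      rw [show (1 - 2*t) = 2 * (1/2 - t) by ring, abs_mul, abs_of_pos two_pos]
    simp only [this]; ring
  have hcont0 : Continuous (fun t : ℝ => |1/2 - t|) :=
    (continuous_const.sub continuous_id).abs
  have hI0 : (∫ t in (0:ℝ)..1, |1/2 - t|) = 1/4 := by
    have hsplit := intervalIntegral.integral_add_adjacent_intervals (μ := volume)
      (a := (0:ℝ)) (b := 1/2) (c := 1) (f := fun t : ℝ => |1/2 - t|)
      (hcont0.intervalIntegrable _ _) (hcont0.intervalIntegrable _ _)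
    have hs1 : ∫ t in (0:ℝ)..(1/2), |1/2 - t| = ∫ t in (0:ℝ)..(1/2), (1/2 - t) := by
      apply intervalIntegral.integral_congr
      intro t ht
      rw [Set.uIcc_of_le (by norm_num)] at ht
      simp only; rw [abs_of_nonneg (by linarith [ht.2])]
    have hs2 : ∫ t in (1/2:ℝ)..1, |1/2 - t| = ∫ t in (1/2:ℝ)..1, (t - 1/2) := by
      apply intervalIntegral.integral_congr
      intro t ht
      rw [Set.uIcc_of_le (by norm_num)] at ht
      simp only; rw [abs_of_nonpos (by linarith [ht.1])]; ring
    have c1 : ∫ t in (0:ℝ)..(1/2), (1/2 - t) = 1/8 := by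
      rw [intervalIntegral.integral_sub intervalIntegrable_const intervalIntegral.intervalIntegrable_id,
        intervalIntegral.integral_const, integral_id]
      norm_num
    have c2 : ∫ t in (1/2:ℝ)..1, (t - 1/2) = 1/8 := by
      rw [intervalIntegral.integral_sub intervalIntegral.intervalIntegrable_id intervalIntegrable_const,
        intervalIntegral.integral_const, integral_id]
      norm_num
    rw [← hsplit, hs1, hs2, c1, c2]
    norm_num
  have hcont1 : Continuous (fun t : ℝ => |1/2 - t| * t ^ q) :=
    ((continuous_const.sub continuous_id).abs).mul (Real.continuous_rpow_const hq)
  have hGval : (∫ t in (0:ℝ)..1, G t)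
      = A * ((1 + 2 ^ q * q) / (2 ^ q * (q + 1) * (q + 2)) / 2)
        + m * B * (1/4) - m * B * ((1 + 2 ^ q * q) / (2 ^ q * (q + 1) * (q + 2)) / 2) := by
    rw [← hIq, ← hI0]
    rw [← intervalIntegral.integral_const_mul, ← intervalIntegral.integral_const_mul,
      ← intervalIntegral.integral_const_mul]
    rw [← intervalIntegral.integral_add (f := fun t : ℝ => A * (|1/2 - t| * t ^ q)) (g := fun t : ℝ => m * B * |1/2 - t|)
        ((continuous_const.mul hcont1 : Continuous fun t : ℝ => A * (|1/2 - t| * t ^ q)).intervalIntegrable _ _)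
        ((continuous_const.mul hcont0 : Continuous fun t : ℝ => m * B * |1/2 - t|).intervalIntegrable _ _),
      ← intervalIntegral.integral_sub (f := fun t : ℝ => A * (|1/2 - t| * t ^ q) + m * B * |1/2 - t|) (g := fun t : ℝ => m * B * (|1/2 - t| * t ^ q))
        (((continuous_const.mul hcont1 : Continuous fun t : ℝ => A * (|1/2 - t| * t ^ q)).add (continuous_const.mul hcont0 : Continuous fun t : ℝ => m * B * |1/2 - t|)).intervalIntegrable _ _)
        ((continuous_const.mul hcont1 : Continuous fun t : ℝ => m * B * (|1/2 - t| * t ^ q)).intervalIntegrable _ _)]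
    apply intervalIntegral.integral_congr
    intro t _
    simp only [hG_def]
    ring
  calc (1 / (b - a)) * |K|
      ≤ (1 / (b - a)) * ((b - a) * ((b - a) * ∫ t in (0:ℝ)..1, G t)) := by
        apply mul_le_mul_of_nonneg_left _ (by positivity)
        exact le_trans hstep1 (le_trans hstep2 (le_of_eq hcov))
    _ = (b - a) * ∫ t in (0:ℝ)..1, G t := by
        field_simp
    _ = ((b - a) / 2) *
        ((1 + 2 ^ q * q) / (2 ^ q * (q + 1) * (q + 2)) * A
          + m * (1 / 2 - (1 + 2 ^ q * q) / (2 ^ q * (q + 1) * (q + 2))) * B) := by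
        rw [hGval]; ring
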